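/- Let t and d be integers such that the polynomial x² − t·x + d is irreducible over ℚ, let R = ℤ[α] = ℤ[X]/(X² − tX + d) with α the image of X, and let A be a 2×2 integer matrix satisfying A·A − t·A + d·I = 0. Then there exists a nonzero vector v : Fin 2 → R such that (the image of) A applied to v equals α·v, i.e. mapping the entries of A into R via the canonical map ℤ → R, one has A.mulVec v = α • v. -/

import Mathlib

open Polynomial

/-- The order `ℤ[α] = ℤ[X]/(X² − tX + d)` of the quadratic field `ℚ(α)`. -/
def QuadOrder (t d : ℤ) : Type :=
  AdjoinRoot ((X : ℤ[X]) ^ 2 - C t * X + C d)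

noncomputable instance (t d : ℤ) : CommRing (QuadOrder t d) :=
  inferInstanceAs (CommRing (AdjoinRoot _))

/-- The root `α`, i.e. the image of `X` in `ℤ[X]/(X² − tX + d)`. -/
noncomputable def quadAlpha (t d : ℤ) : QuadOrder t d :=
  AdjoinRoot.root _

/-- if `x² − tx + d` is irreducible over `ℚ` and `A` is a 2×2 integer
matrix with `A² − tA + dI = 0`, then `A` has a nonzero eigenvector with entries in
`ℤ[α]` for the eigenvalue `α`. -/
theorem exists_eigenvector_in_quad_order (t d : ℤ)
    (hirr : Irreducible ((X : ℚ[X]) ^ 2 - C (t : ℚ) * X + C (d : ℚ)))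
    (A : Matrix (Fin 2) (Fin 2) ℤ)
    (hA : A * A - t • A + d • (1 : Matrix (Fin 2) (Fin 2) ℤ) = 0) :
    ∃ v : Fin 2 → QuadOrder t d, v ≠ 0 ∧
      (A.map (Int.cast : ℤ → QuadOrder t d)).mulVec v = quadAlpha t d • v := by
  set p : ℤ[X] := (X : ℤ[X]) ^ 2 - C t * X + C d with hp
  set R := QuadOrder t d
  set a : R := quadAlpha t d with ha
  -- α² - tα + d = 0
  have h0 : a ^ 2 - (t : R) * a + (d : R) = 0 := by
    have h : AdjoinRoot.mk p p = 0 := AdjoinRoot.mk_self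
    rw [hp] at h
    have hC : ∀ n : ℤ, (AdjoinRoot.mk p) (C n) = (n : R) := by
      intro n
      rw [show (C n : ℤ[X]) = (n : ℤ[X]) by simp, map_intCast]; rfl
    simp [map_add, map_sub, map_mul, map_pow, AdjoinRoot.mk_X, hC, ha, quadAlpha] at h
    exact h
  -- α is not an integer
  have hane : ∀ n : ℤ, a ≠ (n : R) := by
    intro n hn
    have hz : AdjoinRoot.mk p (X - C n) = 0 := by
      have hC : (AdjoinRoot.mk p) (C n) = (n : R) := by
        rw [show (C n : ℤ[X]) = (n : ℤ[X]) by simp, map_intCast]; rfl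
      rw [map_sub, AdjoinRoot.mk_X, hC]
      show a - (n : R) = 0
      rw [hn, sub_self]
    rw [AdjoinRoot.mk_eq_zero] at hz
    have hdeg : p.degree ≤ (X - C n : ℤ[X]).degree :=
      degree_le_of_dvd hz (X_sub_C_ne_zero n)
    rw [degree_X_sub_C] at hdeg
    have hp2 : p.degree = 2 := by rw [hp]; compute_degree!
    rw [hp2] at hdeg
    exact absurd hdeg (by norm_num)
  set B : Matrix (Fin 2) (Fin 2) R := A.map (Int.cast : ℤ → R) with hBdef
  have f : ℤ →+* R := Int.castRingHom R
  -- image of the matrix equation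
  have hB : B * B - (t : R) • B + (d : R) • (1 : Matrix (Fin 2) (Fin 2) R) = 0 := by
    have h := congrArg ((Int.castRingHom R).mapMatrix) hA
    simp only [map_add, map_sub, map_mul, map_zsmul, map_one, map_zero] at h
    rw [Int.cast_smul_eq_zsmul, Int.cast_smul_eq_zsmul]
    convert h using 3 <;> rfl
  -- key factorization
  have key : (B - a • 1) * (B + (a - (t : R)) • 1) = 0 := by
    have h1 : a * (a - (t : R)) = -(d : R) := by linear_combination h0
    have expand : (B - a • 1) * (B + (a - (t : R)) • 1)
        = B * B - (t : R) • B + (d : R) • 1 := by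
      rw [sub_mul, mul_add, mul_add, Matrix.mul_smul, Matrix.mul_smul, Matrix.mul_one,
        Matrix.smul_mul, Matrix.smul_mul, Matrix.one_mul, smul_smul, mul_comm (a - (t : R)) a, h1]
      rw [sub_smul, neg_smul, mul_one]
      abel
    rw [expand, hB]
  set v : Fin 2 → R := fun i => (B + (a - (t : R)) • 1) i 0 with hv
  refine ⟨v, ?_, ?_⟩
  · intro hv0
    have h00 : v 0 = 0 := congrFun hv0 0
    have : a = ((t - A 0 0 : ℤ) : R) := by
      simp only [hv, Matrix.add_apply, Matrix.smul_apply, Matrix.one_apply_eq, hBdef,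
        Matrix.map_apply, smul_eq_mul, mul_one] at h00
      push_cast
      linear_combination h00
    exact hane _ this
  · have hmv : (B - a • 1).mulVec v = fun i => ((B - a • 1) * (B + (a - (t : R)) • 1)) i 0 := by
      funext i
      simp [hv, Matrix.mulVec, Matrix.mul_apply, dotProduct]
    rw [key] at hmv
    have : B.mulVec v - (a • (1 : Matrix (Fin 2) (Fin 2) R)).mulVec v = 0 := by
      rw [← Matrix.sub_mulVec, hmv]; rfl
    rw [Matrix.smul_mulVec, Matrix.one_mulVec, sub_eq_zero] at this
    exact this
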